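/- arXiv:1408.4924 — 2 statements merged into one kernel-verified Lean document; each statement's English description precedes it below -/
import Mathlib

section
/- With R : G_n → G_n defined by R(x) = S(x)(x_1 ⋯ x_n) as above, the composition R² equals (−1)^{n(n−1)/2} times the identity map on G_n. -/
/-! STATEMENT 12: with R : G_n → G_n defined by R(x) = S(x)(x_1⋯x_n), where S is the
involutive automorphism of the operator algebra of the Grassmann algebra G_n exchanging
the multiplication operators x_i with the left derivations ∂_i, the composition R²
equals (−1)^{n(n−1)/2} times the identity map of G_n. -/

abbrev Grass (n : ℕ) := ExteriorAlgebra ℂ (Fin n → ℂ)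

namespace Gr12
variable {n : ℕ}

noncomputable def ee (i : Fin n) : Grass n := ExteriorAlgebra.ι ℂ (Pi.single i (1 : ℂ))

noncomputable def eprod (l : List (Fin n)) : Grass n := (l.map ee).prod

lemma ee_swap (i j : Fin n) : ee i * ee j = -(ee j * ee i) := by
  have h := ExteriorAlgebra.ι_add_mul_swap (R := ℂ) (Pi.single i (1:ℂ) : Fin n → ℂ) (Pi.single j (1:ℂ) : Fin n → ℂ)
  have := eq_neg_of_add_eq_zero_left h
  simpa [ee] using this

lemma ee_mul_eprod (i : Fin n) : ∀ l : List (Fin n), i ∈ l → ee i * eprod l = 0 := by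
  intro l
  induction l with
  | nil => simp
  | cons j t ih =>
    intro hmem
    rcases List.mem_cons.1 hmem with h | h
    · subst h
      have : (ee i * ee i) = 0 := by
        simpa [ee] using ExteriorAlgebra.ι_sq_zero (R := ℂ) (Pi.single i (1:ℂ))
      rw [eprod, List.map_cons, List.prod_cons, ← mul_assoc, this, zero_mul]
    · rw [eprod, List.map_cons, List.prod_cons, ← mul_assoc, ee_swap, neg_mul,
        mul_assoc]
      rw [show (t.map ee).prod = eprod t from rfl, ih h, mul_zero, neg_zero]

lemma grass_ind (P : Grass n → Prop)
    (hsmul : ∀ (c : ℂ) (x), P x → P (c • x))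
    (hadd : ∀ x y, P x → P y → P (x + y))
    (h1 : P 1)
    (hmul : ∀ (i : Fin n) (x), P x → P (ee i * x)) :
    ∀ x, P x := by
  have h0 : P 0 := by simpa using hsmul 0 1 h1
  have hsum : ∀ (s : Finset (Fin n)) (f : Fin n → Grass n),
      (∀ i ∈ s, P (f i)) → P (∑ i ∈ s, f i) := by
    intro s
    induction s using Finset.induction with
    | empty => intro f _; simpa using h0
    | insert _ _ hns ih =>
      intro f hf
      rw [Finset.sum_insert hns]
      exact hadd _ _ (hf _ (Finset.mem_insert_self _ _))
        (ih f fun i hi => hf i (Finset.mem_insert_of_mem hi))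
  have key : ∀ y : Grass n, ∀ x, P x → P (y * x) := by
    intro y
    induction y using ExteriorAlgebra.induction with
    | algebraMap r => intro x hx; rw [← Algebra.smul_def]; exact hsmul r x hx
    | ι v =>
      intro x hx
      have hv : (v : Fin n → ℂ) = ∑ i : Fin n, (v i) • (Pi.single i (1:ℂ) : Fin n → ℂ) := by
        funext j
        simp [Pi.single_apply]
      have hι : ExteriorAlgebra.ι ℂ v = ∑ i : Fin n, v i • ee i := by
        conv_lhs => rw [hv]
        rw [map_sum]
        exact Finset.sum_congr rfl fun i _ => map_smul _ _ _
      have : ExteriorAlgebra.ι ℂ v * x = ∑ i : Fin n, v i • (ee i * x) := by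
        rw [hι, Finset.sum_mul]
        exact Finset.sum_congr rfl fun i _ => smul_mul_assoc _ _ _
      rw [this]
      exact hsum _ _ fun i _ => hsmul _ _ (hmul i x hx)
    | mul a b ha hb => intro x hx; rw [mul_assoc]; exact ha _ (hb _ hx)
    | add a b ha hb => intro x hx; rw [add_mul]; exact hadd _ _ (ha _ hx) (hb _ hx)
  intro x
  simpa using key x 1 h1

lemma nat_tri (m : ℕ) : m + m * (m - 1) / 2 = (m + 1) * ((m + 1) - 1) / 2 := by
  rw [← Nat.choose_two_right, ← Nat.choose_two_right,
    Nat.choose_succ_succ' m 1, Nat.choose_one_right]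

section der
variable (der : Fin n → Module.End ℂ (Grass n))

noncomputable def Dlist (l : List (Fin n)) : Module.End ℂ (Grass n) := (l.map der).prod

variable (hder1 : ∀ i, der i 1 = 0)
  (hderL : ∀ (i : Fin n) (v : Fin n → ℂ) (x : Grass n),
      der i (ExteriorAlgebra.ι ℂ v * x) = v i • x - ExteriorAlgebra.ι ℂ v * der i x)

include hderL in
lemma der_ee_ne (i j : Fin n) (hij : j ≠ i) (x : Grass n) :
    der j (ee i * x) = -(ee i * der j x) := by
  have h := hderL j (Pi.single i (1:ℂ)) x
  rw [Pi.single_eq_of_ne hij, zero_smul, zero_sub] at h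
  exact h

include hderL in
lemma der_ee_same (i : Fin n) (x : Grass n) :
    der i (ee i * x) = x - ee i * der i x := by
  have h := hderL i (Pi.single i (1:ℂ)) x
  rw [Pi.single_eq_same, one_smul] at h
  exact h

include hderL in
lemma Dlist_comm (i : Fin n) :
    ∀ l : List (Fin n), i ∉ l → ∀ x,
      Dlist der l (ee i * x) = ((-1 : ℂ) ^ l.length) • (ee i * Dlist der l x) := by
  intro l
  induction l with
  | nil => intro _ x; simp [Dlist]
  | cons j t ih =>
    intro hmem x
    have hji : j ≠ i := fun h => hmem (h ▸ (List.mem_cons_self : j ∈ j :: t))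
    have hit : i ∉ t := fun h => hmem (List.mem_cons_of_mem _ h)
    rw [Dlist, List.map_cons, List.prod_cons, Module.End.mul_apply, Module.End.mul_apply]
    rw [show (t.map der).prod = Dlist der t from rfl, ih hit x, map_smul,
      der_ee_ne der hderL i j hji, List.length_cons, pow_succ, mul_comm _ (-1 : ℂ),
      mul_smul, neg_one_smul, smul_neg]

include hder1 hderL in
lemma Dlist_eprod :
    ∀ l : List (Fin n), l.Nodup →
      Dlist der l (eprod l) = ((-1 : ℂ) ^ (l.length * (l.length - 1) / 2)) • 1 := by
  intro l
  induction l with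
  | nil => intro _; simp [Dlist, eprod]
  | cons i t ih =>
    intro hnd
    rcases List.nodup_cons.1 hnd with ⟨hit, hndt⟩
    rw [eprod, List.map_cons, List.prod_cons, Dlist, List.map_cons, List.prod_cons,
      Module.End.mul_apply, show (t.map der).prod = Dlist der t from rfl,
      show (t.map ee).prod = eprod t from rfl,
      Dlist_comm der hderL i t hit, map_smul, ih hndt, mul_smul_comm, map_smul,
      show ee i * (1:Grass n) = ExteriorAlgebra.ι ℂ (Pi.single i (1:ℂ)) * 1 from rfl]
    rw [← show ee i * (1:Grass n) = ExteriorAlgebra.ι ℂ (Pi.single i (1:ℂ)) * 1 from rfl,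
      der_ee_same der hderL, hder1, mul_zero, sub_zero, smul_smul, ← pow_add,
      List.length_cons, ← nat_tri]

end der
end Gr12


/-- Left multiplication by the generator `x_i`. -/
noncomputable def mulX (n : ℕ) (i : Fin n) : Module.End ℂ (Grass n) :=
  LinearMap.mulLeft ℂ (ExteriorAlgebra.ι ℂ (Pi.single i 1))

/-- The top element `x_1 ⋯ x_n`. -/
noncomputable def topEl (n : ℕ) : Grass n :=
  ((List.finRange n).map fun i => ExteriorAlgebra.ι ℂ (Pi.single i (1 : ℂ))).prod


set_option maxHeartbeats 1000000 in
theorem grassmann_R_squared (n : ℕ)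
    (der : Fin n → Module.End ℂ (Grass n))
    (hder1 : ∀ i, der i 1 = 0)
    (hderL : ∀ (i : Fin n) (v : Fin n → ℂ) (x : Grass n),
      der i (ExteriorAlgebra.ι ℂ v * x) = v i • x - ExteriorAlgebra.ι ℂ v * der i x)
    (S : Module.End ℂ (Grass n) ≃ₐ[ℂ] Module.End ℂ (Grass n))
    (hSx : ∀ i, S (mulX n i) = der i)
    (hSd : ∀ i, S (der i) = mulX n i)
    (hSinv : ∀ Y, S (S Y) = Y) :
    letI R : Grass n → Grass n := fun x => S (LinearMap.mulLeft ℂ x) (topEl n)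
    ∀ x : Grass n, R (R x) = ((-1 : ℂ) ^ (n * (n - 1) / 2)) • x := by
  set R : Grass n → Grass n := fun x => S (LinearMap.mulLeft ℂ x) (topEl n) with hR
  have Rdef : ∀ y : Grass n, R y = S (LinearMap.mulLeft ℂ y) (topEl n) := fun _ => rfl
  have hmulX : ∀ i : Fin n, LinearMap.mulLeft ℂ (Gr12.ee i) = mulX n i := fun _ => rfl
  have htop : topEl n = Gr12.eprod (List.finRange n) := rfl
  have hml : ∀ a b : Grass n, LinearMap.mulLeft ℂ (a * b)
      = LinearMap.mulLeft ℂ a * LinearMap.mulLeft ℂ b := by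
    intro a b; rw [Module.End.mul_eq_comp, LinearMap.mulLeft_mul]
  have S_eprod : ∀ l : List (Fin n),
      S (LinearMap.mulLeft ℂ (Gr12.eprod l)) = Gr12.Dlist der l := by
    intro l
    induction l with
    | nil =>
      rw [show Gr12.eprod ([] : List (Fin n)) = 1 by simp [Gr12.eprod],
        LinearMap.mulLeft_one,
        show (LinearMap.id : Module.End ℂ (Grass n)) = 1 from rfl, map_one]
      simp [Gr12.Dlist]
    | cons i t ih =>
      rw [show Gr12.eprod (i :: t) = Gr12.ee i * Gr12.eprod t by
            simp [Gr12.eprod, Gr12.ee],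
        hml, map_mul, ih, hmulX, hSx]
      simp [Gr12.Dlist]
  have Rsmul : ∀ (c : ℂ) (y : Grass n), R (c • y) = c • R y := by
    intro c y
    rw [Rdef, Rdef, show LinearMap.mulLeft ℂ (c • y) = c • LinearMap.mulLeft ℂ y by
      ext z; simp [smul_mul_assoc], map_smul, LinearMap.smul_apply]
  have Radd : ∀ y z : Grass n, R (y + z) = R y + R z := by
    intro y z
    rw [Rdef, Rdef, Rdef, show LinearMap.mulLeft ℂ (y + z)
        = LinearMap.mulLeft ℂ y + LinearMap.mulLeft ℂ z by
      ext w; simp [add_mul], map_add, LinearMap.add_apply]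
  have Rsub : ∀ y z : Grass n, R (y - z) = R y - R z := by
    intro y z
    rw [Rdef, Rdef, Rdef, show LinearMap.mulLeft ℂ (y - z)
        = LinearMap.mulLeft ℂ y - LinearMap.mulLeft ℂ z by
      ext w; simp [sub_mul], map_sub, LinearMap.sub_apply]
  have R0 : R 0 = 0 := by
    rw [Rdef, show LinearMap.mulLeft ℂ (0 : Grass n) = 0 by ext z; simp, map_zero]
    rfl
  have Rmul : ∀ (i : Fin n) (y : Grass n), R (Gr12.ee i * y) = der i (R y) := by
    intro i y
    rw [Rdef, Rdef, hml, map_mul, hmulX, hSx, Module.End.mul_apply]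
  have R1 : R 1 = topEl n := by
    rw [Rdef, LinearMap.mulLeft_one,
      show (LinearMap.id : Module.End ℂ (Grass n)) = 1 from rfl, map_one,
      Module.End.one_apply]
  have Rtop : R (topEl n) = ((-1 : ℂ) ^ (n * (n - 1) / 2)) • 1 := by
    rw [Rdef, htop, S_eprod,
      Gr12.Dlist_eprod der hder1 hderL _ (List.nodup_finRange n)]
    simp
  have key : ∀ y : Grass n, ∀ i : Fin n, R (der i y) = Gr12.ee i * R y := by
    refine Gr12.grass_ind _ ?_ ?_ ?_ ?_
    · intro c y hy i
      rw [map_smul, Rsmul, hy i, Rsmul, mul_smul_comm]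
    · intro y z hy hz i
      rw [map_add, Radd, hy i, hz i, Radd, mul_add]
    · intro i
      rw [hder1 i, R0, R1, htop,
        Gr12.ee_mul_eprod i (List.finRange n) (List.mem_finRange i)]
    · intro j y hy i
      have h := hderL i (Pi.single j (1 : ℂ) : Fin n → ℂ) y
      rw [show (ExteriorAlgebra.ι ℂ) (Pi.single j (1 : ℂ) : Fin n → ℂ) = Gr12.ee j
        from rfl] at h
      have h2 := hderL j (Pi.single i (1 : ℂ) : Fin n → ℂ) (R y)
      rw [show (ExteriorAlgebra.ι ℂ) (Pi.single i (1 : ℂ) : Fin n → ℂ) = Gr12.ee i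
        from rfl] at h2
      have hcc : (Pi.single j (1 : ℂ) : Fin n → ℂ) i
          = (Pi.single i (1 : ℂ) : Fin n → ℂ) j := by
        rcases eq_or_ne i j with hh | hh
        · subst hh; rfl
        · rw [Pi.single_eq_of_ne hh, Pi.single_eq_of_ne (Ne.symm hh)]
      rw [h, Rsub, Rsmul, Rmul j (der i y), hy i, h2, Rmul j y, hcc, sub_sub_cancel]
  refine Gr12.grass_ind _ ?_ ?_ ?_ ?_
  · intro c y hy
    rw [Rsmul, Rsmul, hy, smul_comm]
  · intro y z hy hz
    rw [Radd, Radd, hy, hz, smul_add]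
  · rw [R1, Rtop]
  · intro i y hy
    rw [Rmul, key (R y) i, hy, mul_smul_comm]
end

section
/- For d ∈ {0,1,...,n} and z ∈ ℂ, the Y(gl_n)-module Φ^{−d}_z obtained by pulling back Λ^d(ℂ^n) through the homomorphism π ∘ ω ∘ τ_{z−1} is isomorphic to the tensor product Φ^{n−d}_z ⊗ Δ'_z, where Φ^{n−d}_z is the pullback of Λ^{n−d}(ℂ^n) through π ∘ τ_z and Δ'_z is the one-dimensional module with T_{ij}(u) acting as δ_{ij}(u−z)/(u−z+1). Explicitly, the map x ↦ R(x) ⊗ (x_1⋯x_n), for x in degree d of the Grassmann algebra G_n, is an isomorphism of Y(gl_n)-modules. -/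
/-- The degree-`d` component `Λ^d(ℂⁿ) ⊆ G_n`: the span of products of `d` generators. -/
noncomputable def GrassDeg (n d : ℕ) : Submodule ℂ (Grass n) :=
  Submodule.span ℂ {x | ∃ l : List (Fin n → ℂ),
    l.length = d ∧ x = (l.map (ExteriorAlgebra.ι ℂ)).prod}

/-- Coefficient of `u^{-r}` in the action δ_{ij} − x_j∂_i/(u−z+1) of `T_{ij}(u)`
on the covector-type module `Φ^{−d}_z`. -/
noncomputable def covCoeff (n : ℕ) (z : ℂ) (der : Fin n → Module.End ℂ (Grass n))
    (r : ℕ) (i j : Fin n) : Module.End ℂ (Grass n) :=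
  if r = 0 then (if i = j then 1 else 0)
  else (-(z - 1) ^ (r - 1)) • (mulX n j * der i)

/-- Coefficient of `u^{-r}` in the action
(δ_{ij} + x_i∂_j/(u−z)) · (u−z)/(u−z+1) of `T_{ij}(u)` on `Φ^{n−d}_z ⊗ Δ'_z`. -/
noncomputable def vecDetCoeff (n : ℕ) (z : ℂ) (der : Fin n → Module.End ℂ (Grass n))
    (r : ℕ) (i j : Fin n) : Module.End ℂ (Grass n) :=
  ∑ s ∈ Finset.range (r + 1),
    (if r - s = 0 then (1 : ℂ) else -(z - 1) ^ (r - s - 1)) •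
      (if s = 0 then (if i = j then 1 else 0)
        else z ^ (s - 1) • (mulX n i * der j))

namespace St16

variable {n : ℕ}

noncomputable def gi (v : Fin n → ℂ) : Grass n := ExteriorAlgebra.ι ℂ v

noncomputable def Pl (l : List (Fin n → ℂ)) : Grass n := (l.map (ExteriorAlgebra.ι ℂ)).prod

noncomputable def ML (x : Grass n) : Module.End ℂ (Grass n) := LinearMap.mulLeft ℂ x

noncomputable def Dv (der : Fin n → Module.End ℂ (Grass n)) (v : Fin n → ℂ) :
    Module.End ℂ (Grass n) := ∑ i, v i • der i

@[simp] lemma Pl_nil : Pl ([] : List (Fin n → ℂ)) = 1 := rfl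

@[simp] lemma Pl_cons (v : Fin n → ℂ) (l : List (Fin n → ℂ)) :
    Pl (v :: l) = gi v * Pl l := by simp [Pl, gi]

@[simp] lemma ML_apply (x y : Grass n) : ML x y = x * y := rfl

lemma ML_mul (x y : Grass n) : ML (x * y) = ML x * ML y := by
  ext w; simp [mul_assoc]

@[simp] lemma ML_one : ML (1 : Grass n) = 1 := by ext y; simp

@[simp] lemma ML_zero : ML (0 : Grass n) = 0 := by ext y; simp

lemma ML_add (x y : Grass n) : ML (x + y) = ML x + ML y := by
  ext w; simp [add_mul]

lemma ML_smul (c : ℂ) (x : Grass n) : ML (c • x) = c • ML x := by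
  ext w; simp [smul_mul_assoc]

lemma ML_sum {α : Type*} (s : Finset α) (f : α → Grass n) :
    ML (∑ i ∈ s, f i) = ∑ i ∈ s, ML (f i) := by
  ext w; simp [Finset.sum_mul, LinearMap.sum_apply]

lemma gi_decomp (v : Fin n → ℂ) : gi v = ∑ i, v i • gi (Pi.single i 1) := by
  unfold gi
  have h : v = ∑ i, v i • (Pi.single i 1 : Fin n → ℂ) := by
    ext j
    simp [Pi.single_apply, Finset.sum_apply, mul_ite]
  conv_lhs => rw [h]
  rw [map_sum]
  simp

lemma ML_gi (v : Fin n → ℂ) : ML (gi v) = ∑ i, v i • mulX n i := by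
  conv_lhs => rw [gi_decomp, ML_sum]
  refine Finset.sum_congr rfl fun i _ => ?_
  rw [ML_smul]; rfl


section WithDer

variable (der : Fin n → Module.End ℂ (Grass n))

@[simp] lemma Dv_single (i : Fin n) : Dv der (Pi.single i 1) = der i := by
  unfold Dv
  rw [Finset.sum_eq_single i]
  · simp
  · intro b _ hb; rw [Pi.single_eq_of_ne hb]; simp
  · simp

variable (hder1 : ∀ i, der i 1 = 0)
variable (hderL : ∀ (i : Fin n) (v : Fin n → ℂ) (x : Grass n),
      der i (ExteriorAlgebra.ι ℂ v * x) = v i • x - ExteriorAlgebra.ι ℂ v * der i x)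

include hder1 in
lemma Dv_one (v : Fin n → ℂ) : Dv der v 1 = 0 := by
  unfold Dv; simp [LinearMap.sum_apply, hder1]

include hderL in
lemma Dv_leibniz (v w : Fin n → ℂ) (x : Grass n) :
    Dv der v (gi w * x) = (∑ i, v i * w i) • x - gi w * Dv der v x := by
  unfold Dv gi
  rw [LinearMap.sum_apply]
  simp only [LinearMap.smul_apply, hderL, smul_sub, smul_smul]
  rw [Finset.sum_sub_distrib, ← Finset.sum_smul, LinearMap.sum_apply, Finset.mul_sum]
  congr 1
  exact Finset.sum_congr rfl fun i _ => by simp [mul_smul_comm]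

include hder1 hderL in
lemma Dv_Pl_mul (v : Fin n → ℂ) :
    ∀ (l : List (Fin n → ℂ)) (w : Grass n),
      Dv der v (Pl l * w) = Dv der v (Pl l) * w
        + ((-1 : ℂ) ^ l.length) • (Pl l * Dv der v w) := by
  intro l
  induction l with
  | nil => intro w; simp [Dv_one der hder1]
  | cons u l ih =>
    intro w
    rw [Pl_cons, mul_assoc, Dv_leibniz der hderL, ih,
      Dv_leibniz der hderL]
    rw [List.length_cons, pow_succ]
    set c : ℂ := ∑ i, v i * u i
    set k : ℂ := (-1 : ℂ) ^ l.length
    rw [mul_add, sub_mul, smul_mul_assoc, mul_smul_comm, ← mul_assoc, ← mul_assoc]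
    module

end WithDer


lemma Pl_mem (l : List (Fin n → ℂ)) : Pl l ∈ GrassDeg n l.length :=
  Submodule.subset_span ⟨l, rfl, rfl⟩

lemma M_deg (v : Fin n → ℂ) (k : ℕ) :
    ∀ x ∈ GrassDeg n k, gi v * x ∈ GrassDeg n (k + 1) := by
  intro x hx
  induction hx using Submodule.span_induction with
  | mem x hx =>
    obtain ⟨l, hl, rfl⟩ := hx
    have : gi v * (l.map (ExteriorAlgebra.ι ℂ)).prod = Pl (v :: l) := by simp [Pl, gi]
    rw [this]
    have := Pl_mem (n := n) (v :: l)
    simpa [hl] using this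
  | zero => simp
  | add x y hx hy ihx ihy => rw [mul_add]; exact add_mem ihx ihy
  | smul c x hx ih => rw [mul_smul_comm]; exact Submodule.smul_mem _ _ ih

section WithDer2

variable (der : Fin n → Module.End ℂ (Grass n))
variable (hder1 : ∀ i, der i 1 = 0)
variable (hderL : ∀ (i : Fin n) (v : Fin n → ℂ) (x : Grass n),
      der i (ExteriorAlgebra.ι ℂ v * x) = v i • x - ExteriorAlgebra.ι ℂ v * der i x)

include hder1 hderL in
lemma Dv_Pl_mem (v : Fin n → ℂ) :
    ∀ l : List (Fin n → ℂ), Dv der v (Pl l) ∈ GrassDeg n (l.length - 1) := by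
  intro l
  induction l with
  | nil => simp [Dv_one der hder1]
  | cons u l ih =>
    rw [Pl_cons, Dv_leibniz der hderL]
    refine sub_mem (Submodule.smul_mem _ _ ?_) ?_
    · simpa using Pl_mem (n := n) l
    · cases l with
      | nil => simp [Dv_one der hder1]
      | cons u' l' =>
        have h1 : gi u * Dv der v (Pl (u' :: l')) ∈
            GrassDeg n ((u' :: l').length - 1 + 1) :=
          M_deg u _ _ (ih)
        simpa using h1

include hder1 hderL in
lemma D_deg (v : Fin n → ℂ) (k : ℕ) :
    ∀ x ∈ GrassDeg n k, Dv der v x ∈ GrassDeg n (k - 1) := by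
  intro x hx
  induction hx using Submodule.span_induction with
  | mem x hx =>
    obtain ⟨l, hl, rfl⟩ := hx
    have := Dv_Pl_mem der hder1 hderL v l
    rw [hl] at this
    exact this
  | zero => simp
  | add x y hx hy ihx ihy => rw [map_add]; exact add_mem ihx ihy
  | smul c x hx ih => rw [map_smul]; exact Submodule.smul_mem _ _ ih

end WithDer2

lemma topEl_eq_Pl : topEl n = Pl (((List.finRange n).map fun i => (Pi.single i 1 : Fin n → ℂ))) := by
  unfold topEl Pl
  rw [List.map_map]
  rfl

lemma topEl_mem : topEl n ∈ GrassDeg n n := by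
  rw [topEl_eq_Pl]
  have := Pl_mem (n := n) (((List.finRange n).map fun i => (Pi.single i 1 : Fin n → ℂ)))
  simpa using this

lemma gi_single_mul_top (i : Fin n) : gi (Pi.single i 1) * topEl n = 0 := by
  have h := ExteriorAlgebra.ι_mul_prod_list (R := ℂ) (fun i : Fin n => (Pi.single i 1 : Fin n → ℂ)) i
  rw [List.ofFn_eq_map] at h
  exact h

lemma gi_mul_top (v : Fin n → ℂ) : gi v * topEl n = 0 := by
  rw [gi_decomp]
  rw [Finset.sum_mul]
  simp [smul_mul_assoc, gi_single_mul_top]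


noncomputable def Rf (S : Module.End ℂ (Grass n) ≃ₐ[ℂ] Module.End ℂ (Grass n))
    (x : Grass n) : Grass n := S (LinearMap.mulLeft ℂ x) (topEl n)

section WithS

variable (der : Fin n → Module.End ℂ (Grass n))
variable (S : Module.End ℂ (Grass n) ≃ₐ[ℂ] Module.End ℂ (Grass n))
variable (hder1 : ∀ i, der i 1 = 0)
variable (hderL : ∀ (i : Fin n) (v : Fin n → ℂ) (x : Grass n),
      der i (ExteriorAlgebra.ι ℂ v * x) = v i • x - ExteriorAlgebra.ι ℂ v * der i x)
variable (hSx : ∀ i, S (mulX n i) = der i)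
variable (hSd : ∀ i, S (der i) = mulX n i)

lemma Rf_eq_ML (x : Grass n) : Rf S x = S (ML x) (topEl n) := rfl

include hSx in
lemma S_ML_gi (v : Fin n → ℂ) : S (ML (gi v)) = Dv der v := by
  rw [ML_gi, map_sum]
  unfold Dv
  exact Finset.sum_congr rfl fun i _ => by rw [map_smul, hSx]

include hSd in
lemma S_Dv (v : Fin n → ℂ) : S (Dv der v) = ML (gi v) := by
  unfold Dv
  rw [map_sum, ML_gi]
  exact Finset.sum_congr rfl fun i _ => by rw [map_smul, hSd]

@[simp] lemma Rf_one : Rf S 1 = topEl n := by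
  rw [Rf_eq_ML, ML_one, map_one]; rfl

@[simp] lemma Rf_zero : Rf S 0 = 0 := by
  rw [Rf_eq_ML, ML_zero, map_zero]; rfl

lemma Rf_add (x y : Grass n) : Rf S (x + y) = Rf S x + Rf S y := by
  simp only [Rf_eq_ML, ML_add, map_add, LinearMap.add_apply]

lemma Rf_smul (c : ℂ) (x : Grass n) : Rf S (c • x) = c • Rf S x := by
  simp only [Rf_eq_ML, ML_smul, map_smul, LinearMap.smul_apply]

include hSx in
lemma Rf_gi_mul (v : Fin n → ℂ) (x : Grass n) :
    Rf S (gi v * x) = Dv der v (Rf S x) := by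
  rw [Rf_eq_ML, ML_mul, map_mul, S_ML_gi der S hSx, Module.End.mul_apply, Rf_eq_ML]

include hder1 hderL in
lemma Lop (v : Fin n → ℂ) (k : ℕ) :
    ∀ x ∈ GrassDeg n k, ML (Dv der v x)
      = Dv der v * ML x - ((-1 : ℂ) ^ k) • (ML x * Dv der v) := by
  intro x hx
  induction hx using Submodule.span_induction with
  | mem x hx =>
    obtain ⟨l, hl, rfl⟩ := hx
    have hPl : (l.map (ExteriorAlgebra.ι ℂ)).prod = Pl l := rfl
    rw [hPl]
    refine LinearMap.ext fun w => ?_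
    rw [LinearMap.sub_apply, Module.End.mul_apply, LinearMap.smul_apply, Module.End.mul_apply]
    have := Dv_Pl_mul der hder1 hderL v l w
    rw [hl] at this
    rw [ML_apply, ML_apply, ML_apply, this]
    abel
  | zero => simp
  | add x y hx hy ihx ihy =>
    rw [map_add, ML_add, ML_add, ihx, ihy, mul_add, add_mul, smul_add]
    abel
  | smul c x hx ih =>
    rw [map_smul, ML_smul, ML_smul, ih]
    rw [smul_sub]
    congr 1
    · rw [mul_smul_comm]
    · rw [smul_comm, smul_mul_assoc]

include hder1 hderL hSd in
lemma Rstar (v : Fin n → ℂ) (k : ℕ) :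
    ∀ x ∈ GrassDeg n k, Rf S (Dv der v x) = gi v * Rf S x := by
  intro x hx
  rw [Rf_eq_ML, Lop der hder1 hderL v k x hx, map_sub, map_smul, map_mul, map_mul,
    S_Dv der S hSd]
  simp only [LinearMap.sub_apply, LinearMap.smul_apply, Module.End.mul_apply]
  rw [ML_apply, ML_apply, gi_mul_top, map_zero, smul_zero, sub_zero, Rf_eq_ML]

include hder1 hderL hSx in
lemma R_deg (k : ℕ) : ∀ x ∈ GrassDeg n k, Rf S x ∈ GrassDeg n (n - k) := by
  intro x hx
  induction hx using Submodule.span_induction with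
  | mem x hx =>
    obtain ⟨l, hl, rfl⟩ := hx
    subst hl
    have hPl : (l.map (ExteriorAlgebra.ι ℂ)).prod = Pl l := rfl
    rw [hPl]
    clear hPl
    induction l with
    | nil => simpa using topEl_mem
    | cons u l ih =>
      rw [Pl_cons, Rf_gi_mul der S hSx]
      have h2 := D_deg der hder1 hderL u (n - l.length) _ ih
      have : n - l.length - 1 = n - (u :: l).length := by
        simp [Nat.sub_sub]
      rwa [this] at h2
  | zero => simpa using Submodule.zero_mem _
  | add x y hx hy ihx ihy => rw [Rf_add]; exact add_mem ihx ihy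
  | smul c x hx ih => rw [Rf_smul]; exact Submodule.smul_mem _ _ ih

end WithS


lemma ML_Pl (l : List (Fin n → ℂ)) : ML (Pl l) = (l.map (fun v => ML (gi v))).prod := by
  induction l with
  | nil => simp
  | cons u l ih => rw [Pl_cons, ML_mul, ih, List.map_cons, List.prod_cons]

section WithS2

variable (der : Fin n → Module.End ℂ (Grass n))
variable (S : Module.End ℂ (Grass n) ≃ₐ[ℂ] Module.End ℂ (Grass n))
variable (hder1 : ∀ i, der i 1 = 0)
variable (hderL : ∀ (i : Fin n) (v : Fin n → ℂ) (x : Grass n),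
      der i (ExteriorAlgebra.ι ℂ v * x) = v i • x - ExteriorAlgebra.ι ℂ v * der i x)
variable (hSx : ∀ i, S (mulX n i) = der i)
variable (hSd : ∀ i, S (der i) = mulX n i)

include hSx in
lemma S_ML_top : S (ML (topEl n)) = ((List.finRange n).map der).prod := by
  rw [topEl_eq_Pl, ML_Pl, map_list_prod, List.map_map, List.map_map]
  congr 1
  refine List.map_congr_left fun i _ => ?_
  show S (ML (gi (Pi.single i 1))) = der i
  exact hSx i

include hderL in
lemma ders_prod_gi : ∀ (l : List (Fin n)) (i : Fin n), i ∉ l → ∀ w : Grass n,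
    ((l.map der).prod) (gi (Pi.single i 1) * w)
      = ((-1 : ℂ) ^ l.length) • (gi (Pi.single i 1) * ((l.map der).prod w)) := by
  intro l
  induction l with
  | nil => intro i _ w; simp
  | cons j l ih =>
    intro i hi w
    have hji : i ∉ l := fun h => hi (List.mem_cons_of_mem _ h)
    have hne : j ≠ i := fun h => hi (h ▸ (List.mem_cons_self : j ∈ j :: l))
    rw [List.map_cons, List.prod_cons, Module.End.mul_apply, ih i hji w, map_smul]
    have : der j (gi (Pi.single i 1) * ((l.map der).prod w))
        = (Pi.single i 1 : Fin n → ℂ) j • ((l.map der).prod w)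
          - gi (Pi.single i 1) * der j ((l.map der).prod w) := hderL j _ _
    rw [this, Pi.single_eq_of_ne hne, zero_smul, zero_sub, smul_neg,
      List.length_cons, pow_succ, Module.End.mul_apply]
    rw [mul_comm ((-1 : ℂ) ^ l.length) (-1), ← smul_smul, neg_one_smul]

include hder1 hderL in
lemma ders_prod_top : ∀ l : List (Fin n), l.Nodup →
    ∃ c : ℂ, c ≠ 0 ∧ ((l.map der).prod) (Pl (l.map fun i => (Pi.single i 1 : Fin n → ℂ)))
      = c • 1 := by
  intro l
  induction l with
  | nil => intro _; exact ⟨1, one_ne_zero, by simp⟩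
  | cons i l ih =>
    intro hnd
    obtain ⟨hi, hnd'⟩ := List.nodup_cons.mp hnd
    obtain ⟨c, hc0, hc⟩ := ih hnd'
    refine ⟨(-1 : ℂ) ^ l.length * c, by simp [hc0], ?_⟩
    rw [List.map_cons, List.prod_cons, List.map_cons, Pl_cons, Module.End.mul_apply,
      ders_prod_gi der hderL l i hi, hc, map_smul]
    have : der i (gi (Pi.single i 1) * (c • (1 : Grass n)))
        = (Pi.single i 1 : Fin n → ℂ) i • (c • (1 : Grass n))
          - gi (Pi.single i 1) * der i (c • (1 : Grass n)) := hderL i _ _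
    rw [this, Pi.single_eq_same, one_smul, map_smul, hder1, smul_zero, mul_zero, sub_zero,
      smul_smul]

include hder1 hderL hSx in
lemma Rf_top : ∃ c : ℂ, c ≠ 0 ∧ Rf S (topEl n) = c • 1 := by
  obtain ⟨c, hc0, hc⟩ := ders_prod_top der hder1 hderL (List.finRange n) (List.nodup_finRange n)
  refine ⟨c, hc0, ?_⟩
  rw [Rf_eq_ML, S_ML_top der S hSx]
  rw [topEl_eq_Pl]
  exact hc

include hder1 hderL hSx hSd in
lemma RR (c : ℂ) (hc : Rf S (topEl n) = c • 1) :
    ∀ k : ℕ, ∀ x ∈ GrassDeg n k, Rf S (Rf S x) = c • x := by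
  intro k
  induction k with
  | zero =>
    intro x hx
    induction hx using Submodule.span_induction with
    | mem x hx =>
      obtain ⟨l, hl, rfl⟩ := hx
      rw [List.length_eq_zero_iff] at hl
      subst hl
      simpa using hc
    | zero => simp
    | add x y hx hy ihx ihy => rw [Rf_add, Rf_add, ihx, ihy, smul_add]
    | smul a x hx ih => rw [Rf_smul, Rf_smul, ih, smul_comm]
  | succ k ihk =>
    intro x hx
    induction hx using Submodule.span_induction with
    | mem x hx =>
      obtain ⟨l, hl, rfl⟩ := hx
      cases l with
      | nil => simp at hl
      | cons u l =>
        have hlen : l.length = k := by simpa using hl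
        have hPl : ((u :: l).map (ExteriorAlgebra.ι ℂ)).prod = Pl (u :: l) := rfl
        rw [hPl, Pl_cons, Rf_gi_mul der S hSx,
          Rstar der S hder1 hderL hSd u (n - k) _
            (by simpa [hlen] using R_deg der S hder1 hderL hSx l.length _ (Pl_mem l)),
          ihk _ (by simpa [hlen] using Pl_mem (n := n) l), mul_smul_comm]
    | zero => simp
    | add x y hx hy ihx ihy => rw [Rf_add, Rf_add, ihx, ihy, smul_add]
    | smul a x hx ih => rw [Rf_smul, Rf_smul, ih, smul_comm]

end WithS2


lemma geom_aux (z : ℂ) (r : ℕ) :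
    ∑ s ∈ Finset.range (r + 1), (if r - s = 0 then (1 : ℂ) else -(z - 1) ^ (r - s - 1)) * z ^ s
      = (z - 1) ^ r := by
  rw [Finset.sum_range_succ]
  have hlast : (if r - r = 0 then (1 : ℂ) else -(z - 1) ^ (r - r - 1)) * z ^ r = z ^ r := by
    simp
  rw [hlast]
  have hrest : ∑ s ∈ Finset.range r, (if r - s = 0 then (1 : ℂ) else -(z - 1) ^ (r - s - 1)) * z ^ s
      = -∑ s ∈ Finset.range r, z ^ s * (z - 1) ^ (r - 1 - s) := by
    rw [← Finset.sum_neg_distrib]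
    refine Finset.sum_congr rfl fun s hs => ?_
    have hs' : s < r := Finset.mem_range.mp hs
    rw [if_neg (by omega : ¬ r - s = 0), (by omega : r - s - 1 = r - 1 - s)]
    ring
  rw [hrest]
  have hgeo := geom_sum₂_mul z (z - 1) r
  rw [(by ring : z - (z - 1) = 1), mul_one] at hgeo
  rw [hgeo]
  ring

section WithS3

variable (der : Fin n → Module.End ℂ (Grass n))
variable (S : Module.End ℂ (Grass n) ≃ₐ[ℂ] Module.End ℂ (Grass n))
variable (hder1 : ∀ i, der i 1 = 0)
variable (hderL : ∀ (i : Fin n) (v : Fin n → ℂ) (x : Grass n),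
      der i (ExteriorAlgebra.ι ℂ v * x) = v i • x - ExteriorAlgebra.ι ℂ v * der i x)
variable (hSx : ∀ i, S (mulX n i) = der i)
variable (hSd : ∀ i, S (der i) = mulX n i)

include hder1 hderL hSx hSd in
lemma star_rel (d : ℕ) (i j : Fin n) :
    ∀ x ∈ GrassDeg n d,
      Rf S ((mulX n j * der i) x)
        = (if i = j then (1 : ℂ) else 0) • Rf S x - (mulX n i * der j) (Rf S x) := by
  intro x hx
  have h1 : (mulX n j * der i) x = gi (Pi.single j 1) * (der i x) := rfl
  rw [h1, Rf_gi_mul der S hSx, Dv_single]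
  have h2 : der i x = Dv der (Pi.single i 1) x := by rw [Dv_single]
  rw [h2, Rstar der S hder1 hderL hSd _ d x hx]
  have h3 : der j (gi (Pi.single i 1) * Rf S x)
      = (Pi.single i 1 : Fin n → ℂ) j • Rf S x
        - gi (Pi.single i 1) * der j (Rf S x) := hderL j _ _
  rw [h3]
  have h4 : (mulX n i * der j) (Rf S x) = gi (Pi.single i 1) * der j (Rf S x) := rfl
  rw [h4]
  congr 1
  rw [Pi.single_apply]
  by_cases h : i = j
  · simp [h]
  · simp [h, Ne.symm h]

end WithS3

end St16

set_option maxHeartbeats 1000000 in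
theorem covector_module_iso_vector_tensor_determinant (n d : ℕ) (hd : d ≤ n) (z : ℂ)
    (der : Fin n → Module.End ℂ (Grass n))
    (hder1 : ∀ i, der i 1 = 0)
    (hderL : ∀ (i : Fin n) (v : Fin n → ℂ) (x : Grass n),
      der i (ExteriorAlgebra.ι ℂ v * x) = v i • x - ExteriorAlgebra.ι ℂ v * der i x)
    (S : Module.End ℂ (Grass n) ≃ₐ[ℂ] Module.End ℂ (Grass n))
    (hSx : ∀ i, S (mulX n i) = der i)
    (hSd : ∀ i, S (der i) = mulX n i)
    (hSinv : ∀ Y, S (S Y) = Y) :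
    letI R : Grass n → Grass n := fun x => S (LinearMap.mulLeft ℂ x) (topEl n)
    Set.BijOn R (GrassDeg n d : Set (Grass n)) (GrassDeg n (n - d) : Set (Grass n)) ∧
    ∀ x ∈ GrassDeg n d, ∀ (r : ℕ) (i j : Fin n),
      vecDetCoeff n z der r i j (R x) = R (covCoeff n z der r i j x) := by
  classical
  obtain ⟨c, hc0, hc⟩ := St16.Rf_top der S hder1 hderL hSx
  have hRRc := St16.RR der S hder1 hderL hSx hSd c hc
  refine ⟨⟨?_, ?_, ?_⟩, ?_⟩
  · intro x hx
    exact St16.R_deg der S hder1 hderL hSx d x hx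
  · intro x hx y hy hxy
    have h1 : St16.Rf S (St16.Rf S x) = St16.Rf S (St16.Rf S y) := congrArg (St16.Rf S) hxy
    rw [hRRc d x hx, hRRc d y hy] at h1
    exact smul_right_injective (Grass n) hc0 h1
  · intro y hy
    have h1 : St16.Rf S y ∈ GrassDeg n d := by
      have := St16.R_deg der S hder1 hderL hSx (n - d) y hy
      rwa [Nat.sub_sub_self hd] at this
    refine ⟨c⁻¹ • St16.Rf S y, Submodule.smul_mem _ _ h1, ?_⟩
    show St16.Rf S (c⁻¹ • St16.Rf S y) = y
    rw [St16.Rf_smul, hRRc (n - d) y hy, smul_smul, inv_mul_cancel₀ hc0, one_smul]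
  · intro x hx r i j
    show vecDetCoeff n z der r i j (St16.Rf S x) = St16.Rf S (covCoeff n z der r i j x)
    have hstar := St16.star_rel der S hder1 hderL hSx hSd d i j x hx
    cases r with
    | zero =>
      rw [covCoeff, if_pos rfl, vecDetCoeff, Finset.sum_range_one]
      by_cases h : i = j
      · simp [h]
      · simp [h]
    | succ r =>
      set B := St16.Rf S x with hBdef
      have hδ : (if i = j then (1 : Module.End ℂ (Grass n)) else 0) B
          = (if i = j then (1 : ℂ) else 0) • B := by
        by_cases h : i = j <;> simp [h]
      have hstep : vecDetCoeff n z der (r + 1) i j B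
          = ((z - 1) ^ r) • ((mulX n i * der j) B)
            + (-(z - 1) ^ r) • ((if i = j then (1 : ℂ) else 0) • B) := by
        rw [vecDetCoeff, LinearMap.sum_apply]
        simp only [LinearMap.smul_apply]
        rw [Finset.sum_range_succ']
        congr 1
        · have hterm : ∀ s ∈ Finset.range (r + 1),
              (if r + 1 - (s + 1) = 0 then (1 : ℂ) else -(z - 1) ^ (r + 1 - (s + 1) - 1)) •
                ((if s + 1 = 0 then (if i = j then (1 : Module.End ℂ (Grass n)) else 0)
                  else z ^ (s + 1 - 1) • (mulX n i * der j)) B)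
              = ((if r - s = 0 then (1 : ℂ) else -(z - 1) ^ (r - s - 1)) * z ^ s)
                  • ((mulX n i * der j) B) := by
            intro s _
            rw [(by omega : r + 1 - (s + 1) = r - s), if_neg (Nat.succ_ne_zero s)]
            simp only [Nat.add_sub_cancel]
            rw [LinearMap.smul_apply, smul_smul]
          rw [Finset.sum_congr rfl hterm, ← Finset.sum_smul, St16.geom_aux]
        · rw [if_pos rfl, hδ, Nat.sub_zero, if_neg (Nat.succ_ne_zero r)]
          simp only [Nat.add_sub_cancel]
      rw [hstep, covCoeff, if_neg (Nat.succ_ne_zero r)]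
      simp only [Nat.add_sub_cancel]
      rw [LinearMap.smul_apply, St16.Rf_smul, hstar]
      module
end
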